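/- arXiv:2402.05818 — 5 statements merged into one kernel-verified Lean document; each statement's English description precedes it below -/
import Mathlib

section
/- Let k be a positive integer, L = {ℓ_1 < ... < ℓ_s} ⊆ {0,...,k-1}, and L^C = {0,...,k-1} \ L = {ℓ'_1 < ... < ℓ'_{k-s}}. Suppose L decomposes into b maximal runs of consecutive integers of lengths m_1,...,m_b, and L^C into b' maximal runs of lengths m'_1,...,m'_{b'}. Then (∏_{i=1}^{b} m_i!) · C(k,k-ℓ_1)·C(k-ℓ_1-1,k-ℓ_2)⋯C(k-ℓ_{s-1}-1,k-ℓ_s) / ∏_{i=1}^{s}(ℓ_i+1)(k-ℓ_i) multiplied by (∏_{j=1}^{b'} m'_j!) · C(k,k-ℓ'_1)·C(k-ℓ'_1-1,k-ℓ'_2)⋯C(k-ℓ'_{k-s-1}-1,k-ℓ'_{k-s}) / ∏_{i=1}^{k-s}(ℓ'_i+1)(k-ℓ'_i) equals 1/k!. -/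
/-- The length of the maximal run of consecutive integers in `L` starting at `a`
(for `a ∈ L`): the least `r` with `a + r ∉ L`. -/
noncomputable def runLen (L : Finset ℕ) (a : ℕ) : ℕ := sInf {r | a + r ∉ L}

/-- The product of the factorials of the lengths of the maximal runs of
consecutive integers in `L` (a run starts at `a ∈ L` iff `a = 0` or `a - 1 ∉ L`). -/
noncomputable def runFactProd (L : Finset ℕ) : ℕ :=
  ∏ a ∈ L.filter (fun a => a = 0 ∨ a - 1 ∉ L), (runLen L a).factorial

open Finset

/-- Chained binomial product: `bp k p [a₁,…]` is `C(p, k-a₁)·C(k-a₁-1, k-a₂)·…` -/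
def bp (k : ℕ) : ℕ → List ℕ → ℕ
  | _, [] => 1
  | p, a :: t => Nat.choose p (k - a) * bp k (k - a - 1) t

lemma bp_map_succ (k p : ℕ) (l : List ℕ) :
    bp (k + 1) p (l.map (· + 1)) = bp k p l := by
  induction l generalizing p with
  | nil => rfl
  | cons a t ih => simp [bp, Nat.succ_sub_succ, ih]

lemma prod_eq_bp (k : ℕ) (l : List ℕ) (p : ℕ) :
    (∏ i ∈ Finset.range l.length,
      Nat.choose (if i = 0 then p else k - l.getD (i - 1) 0 - 1) (k - l.getD i 0))
      = bp k p l := by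
  induction l generalizing p with
  | nil => simp [bp]
  | cons a t ih =>
    rw [List.length_cons, Finset.prod_range_succ']
    have h1 : ∀ i ∈ Finset.range t.length,
        Nat.choose (if i + 1 = 0 then p else k - (a :: t).getD (i + 1 - 1) 0 - 1)
            (k - (a :: t).getD (i + 1) 0)
        = Nat.choose (if i = 0 then k - a - 1 else k - t.getD (i - 1) 0 - 1)
            (k - t.getD i 0) := by
      intro i _
      rw [if_neg (Nat.succ_ne_zero i), List.getD_cons_succ, Nat.add_sub_cancel]
      rcases Nat.eq_zero_or_pos i with rfl | hi
      · simp
      · rw [if_neg hi.ne']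
        obtain ⟨j, rfl⟩ : ∃ j, i = j + 1 := ⟨i - 1, by omega⟩
        simp
    rw [Finset.prod_congr rfl h1, ih (k - a - 1)]
    simp [bp, mul_comm]

lemma prod_getD (f : ℕ → ℕ) (l : List ℕ) :
    ∏ i ∈ Finset.range l.length, f (l.getD i 0) = (l.map f).prod := by
  induction l with
  | nil => simp
  | cons a t ih =>
    rw [List.length_cons, Finset.prod_range_succ']
    simp only [List.getD_cons_succ, List.getD_cons_zero, List.map_cons, List.prod_cons, ih]
    ring

lemma sort_map_prod (L : Finset ℕ) (f : ℕ → ℕ) :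
    ((L.sort (· ≤ ·)).map f).prod = ∏ a ∈ L, f a := by
  rw [Finset.prod_eq_multiset_prod, ← Finset.sort_eq L (· ≤ ·), Multiset.map_coe,
    Multiset.prod_coe]

lemma runLen_shift (A : Finset ℕ) (b : ℕ) (B : Finset ℕ)
    (hB : ∀ r, b + 1 + r ∈ B ↔ b + r ∈ A) :
    runLen B (b + 1) = runLen A b := by
  unfold runLen
  congr 1
  ext r
  simp [hB r]

lemma mem_image_succ (A : Finset ℕ) (x : ℕ) :
    x ∈ A.image (· + 1) ↔ 1 ≤ x ∧ x - 1 ∈ A := by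
  simp only [Finset.mem_image]
  constructor
  · rintro ⟨b, hb, rfl⟩; exact ⟨Nat.le_add_left _ _, by simpa using hb⟩
  · rintro ⟨h1, h2⟩; exact ⟨x - 1, h2, by omega⟩

lemma runFactProd_image_succ (A : Finset ℕ) :
    runFactProd (A.image (· + 1)) = runFactProd A := by
  classical
  unfold runFactProd
  have hfil : (A.image (· + 1)).filter (fun a => a = 0 ∨ a - 1 ∉ A.image (· + 1))
      = (A.filter (fun a => a = 0 ∨ a - 1 ∉ A)).image (· + 1) := by
    ext x
    simp only [Finset.mem_filter, mem_image_succ]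
    constructor
    · rintro ⟨⟨hx1, hx2⟩, hcond⟩
      refine ⟨hx1, hx2, ?_⟩
      rcases hcond with h | h
      · omega
      · by_cases h0 : x - 1 = 0
        · exact Or.inl h0
        · right
          intro hc
          exact h ⟨by omega, hc⟩
    · rintro ⟨hx1, hx2, hcond⟩
      refine ⟨⟨hx1, hx2⟩, Or.inr ?_⟩
      rintro ⟨hge, hmem⟩
      rcases hcond with h | h
      · omega
      · exact h hmem
  rw [hfil, Finset.prod_image (by intro x _ y _ h; simpa using h)]
  refine Finset.prod_congr rfl fun b hb => ?_
  congr 1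
  refine runLen_shift A b _ fun r => ?_
  rw [mem_image_succ]
  constructor
  · rintro ⟨_, h⟩
    rwa [show b + 1 + r - 1 = b + r by omega] at h
  · intro h
    exact ⟨by omega, by rwa [show b + 1 + r - 1 = b + r by omega]⟩

lemma runLen_insert_shift (A : Finset ℕ) (b : ℕ) :
    runLen (insert 0 (A.image (· + 1))) (b + 1) = runLen A b := by
  refine runLen_shift A b _ fun r => ?_
  rw [Finset.mem_insert, mem_image_succ]
  constructor
  · rintro (h | ⟨_, h⟩)
    · omega
    · rwa [show b + 1 + r - 1 = b + r by omega] at h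
  · intro h
    exact Or.inr ⟨by omega, by rwa [show b + 1 + r - 1 = b + r by omega]⟩

lemma sInf_not_mem_shift (S : Finset ℕ) :
    sInf {r | r ∉ insert 0 (S.image (· + 1))} = sInf {r | r ∉ S} + 1 := by
  obtain ⟨x, hx⟩ := Finset.exists_notMem S
  set m := sInf {r | r ∉ S} with hm
  have hmS : m ∉ S := Nat.sInf_mem (⟨x, hx⟩ : Set.Nonempty {r | r ∉ S})
  have hmem : m + 1 ∈ {r | r ∉ insert 0 (S.image (· + 1))} := by
    show m + 1 ∉ insert 0 (S.image (· + 1))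
    rw [Finset.mem_insert, mem_image_succ]
    push_neg
    exact ⟨by omega, fun _ => by simpa using hmS⟩
  refine le_antisymm (Nat.sInf_le hmem) ?_
  set n := sInf {r | r ∉ insert 0 (S.image (· + 1))} with hndef
  have hn : n ∉ insert 0 (S.image (· + 1)) :=
    Nat.sInf_mem (⟨m + 1, hmem⟩ : Set.Nonempty {r | r ∉ insert 0 (S.image (· + 1))})
  rw [Finset.mem_insert, mem_image_succ] at hn
  push_neg at hn
  obtain ⟨h0, h1⟩ := hn
  have h2 : n - 1 ∉ S := h1 (by omega)
  have := Nat.sInf_le (show n - 1 ∈ {r | r ∉ S} from h2)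
  omega

lemma runFactProd_insert_shift (S : Finset ℕ) :
    runFactProd (insert 0 (S.image (· + 1))) = (sInf {r | r ∉ S} + 1) * runFactProd S := by
  classical
  obtain ⟨x, hx⟩ := Finset.exists_notMem S
  set m := sInf {r | r ∉ S} with hm
  set L := insert 0 (S.image (· + 1)) with hLdef
  set Q' : ℕ → Prop := fun b => ¬b = 0 ∧ b - 1 ∉ S with hQ'
  have hfil : L.filter (fun a => a = 0 ∨ a - 1 ∉ L)
      = insert 0 ((S.filter Q').image (· + 1)) := by
    ext x
    simp only [Finset.mem_filter, Finset.mem_insert, mem_image_succ, hLdef, hQ']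
    constructor
    · rintro ⟨h1, h2⟩
      rcases h1 with rfl | ⟨hx1, hA1⟩
      · exact Or.inl rfl
      · right
        have h2' : ¬(x - 1 = 0 ∨ (1 ≤ x - 1 ∧ x - 1 - 1 ∈ S)) := by
          rcases h2 with h | h
          · omega
          · exact h
        push_neg at h2'
        exact ⟨hx1, hA1, h2'.1, h2'.2 (by omega)⟩
    · rintro (rfl | ⟨hx1, hA1, hb0, hb2⟩)
      · exact ⟨Or.inl rfl, Or.inl rfl⟩
      · refine ⟨Or.inr ⟨hx1, hA1⟩, Or.inr ?_⟩
        rintro (h | ⟨_, h⟩)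
        · exact hb0 h
        · exact hb2 h
  have h0notin : (0 : ℕ) ∉ (S.filter Q').image (· + 1) := by
    simp
  rw [runFactProd, hfil, Finset.prod_insert h0notin,
    Finset.prod_image (by intro a _ b _ h; simpa using h)]
  have hrl0 : runLen L 0 = m + 1 := by
    have hset : {r | 0 + r ∉ L} = {r | r ∉ L} := by ext r; simp
    rw [runLen, hset, hLdef, sInf_not_mem_shift]
  have hrlb : ∀ b ∈ S.filter Q', runLen L (b + 1) = runLen S b := by
    intro b _
    exact runLen_insert_shift S b
  rw [hrl0, Finset.prod_congr rfl (fun b hb => by rw [hrlb b hb])]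
  -- now RHS : runFactProd S = m ! * ∏ over filter Q'
  have hRS : runFactProd S = m.factorial * ∏ b ∈ S.filter Q', (runLen S b).factorial := by
    by_cases h0S : (0 : ℕ) ∈ S
    · have : S.filter (fun a => a = 0 ∨ a - 1 ∉ S) = insert 0 (S.filter Q') := by
        ext a
        simp only [Finset.mem_filter, Finset.mem_insert, hQ']
        constructor
        · rintro ⟨haS, rfl | h⟩
          · exact Or.inl rfl
          · by_cases ha0 : a = 0
            · exact Or.inl ha0
            · exact Or.inr ⟨haS, ha0, h⟩
        · rintro (rfl | ⟨haS, ha0, h⟩)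
          · exact ⟨h0S, Or.inl rfl⟩
          · exact ⟨haS, Or.inr h⟩
      rw [runFactProd, this, Finset.prod_insert (by simp [hQ'])]
      congr 2
      rw [runLen]
      simp [hm]
    · have hm0 : m = 0 := by
        rw [hm]
        exact Nat.sInf_eq_zero.mpr (Or.inl h0S)
      have : S.filter (fun a => a = 0 ∨ a - 1 ∉ S) = S.filter Q' := by
        ext a
        simp only [Finset.mem_filter, hQ']
        constructor
        · rintro ⟨haS, h⟩
          have ha0 : ¬ a = 0 := fun hc => h0S (hc ▸ haS)
          exact ⟨haS, ha0, h.resolve_left ha0⟩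
        · rintro ⟨haS, _, h⟩
          exact ⟨haS, Or.inr h⟩
      rw [runFactProd, this, hm0, Nat.factorial_zero, one_mul]
  rw [hRS, Nat.factorial_succ]
  ring

lemma sort_image_succ (A : Finset ℕ) :
    (A.image (· + 1)).sort (· ≤ ·) = (A.sort (· ≤ ·)).map (· + 1) := by
  refine (fun hp hs => List.Perm.eq_of_pairwise' (Finset.pairwise_sort (A.image (· + 1)) (· ≤ ·)) hs hp) ?_ ?_
  · rw [← Multiset.coe_eq_coe]
    rw [Finset.sort_eq, Finset.image_val_of_injOn (by intro a _ b _ h; simpa using h),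
      ← Multiset.map_coe, Finset.sort_eq]
  · exact List.Pairwise.map _ (fun a b h => by omega) (Finset.pairwise_sort A (· ≤ ·))

lemma denom_ne_zero (k : ℕ) (A : Finset ℕ) (hA : A ⊆ Finset.range k) (c : ℕ) :
    ((∏ a ∈ A, ((a + c + 1) * (k - a)) : ℕ) : ℚ) ≠ 0 := by
  rw [Nat.cast_ne_zero]
  refine Finset.prod_ne_zero_iff.mpr fun a ha => ?_
  have : a < k := Finset.mem_range.mp (hA ha)
  exact Nat.mul_ne_zero (by omega) (by omega)

noncomputable def Gq (k : ℕ) (L : Finset ℕ) : ℚ :=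
  ((runFactProd L * bp k k (L.sort (· ≤ ·)) : ℕ) : ℚ)
    / ((∏ a ∈ L, ((a + 1) * (k - a)) : ℕ) : ℚ)

lemma prod_shift_denoms (k : ℕ) :
    (∏ j ∈ Finset.range k, ((j + 2) * (k - j)) : ℕ)
      = (k + 1) * ∏ j ∈ Finset.range k, ((j + 1) * (k - j)) := by
  have h1 : (∏ j ∈ Finset.range k, (j + 2) : ℕ) = (k + 1) * ∏ j ∈ Finset.range k, (j + 1) := by
    induction k with
    | zero => simp
    | succ n ih => rw [Finset.prod_range_succ, Finset.prod_range_succ, ih]; ring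
  calc (∏ j ∈ Finset.range k, ((j + 2) * (k - j)) : ℕ)
      = (∏ j ∈ Finset.range k, (j + 2)) * ∏ j ∈ Finset.range k, (k - j) :=
        Finset.prod_mul_distrib
    _ = ((k + 1) * ∏ j ∈ Finset.range k, (j + 1)) * ∏ j ∈ Finset.range k, (k - j) := by
        rw [h1]
    _ = (k + 1) * ((∏ j ∈ Finset.range k, (j + 1)) * ∏ j ∈ Finset.range k, (k - j)) := by
        ring
    _ = (k + 1) * ∏ j ∈ Finset.range k, ((j + 1) * (k - j)) := by
        rw [Finset.prod_mul_distrib]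

lemma step_lemma (k : ℕ) (S : Finset ℕ) (hS : S ⊆ Finset.range k) :
    Gq (k + 1) (insert 0 (S.image (· + 1))) * Gq (k + 1) ((Finset.range k \ S).image (· + 1))
      = 1 / (k + 1) * (Gq k S * Gq k (Finset.range k \ S)) := by
  classical
  set C0 := Finset.range k \ S with hC0
  have hC0sub : C0 ⊆ Finset.range k := Finset.sdiff_subset
  set m := sInf {r | r ∉ S} with hm
  -- sorted lists
  have h0T : (0 : ℕ) ∉ S.image (· + 1) := by simp
  have hsortL : (insert 0 (S.image (· + 1))).sort (· ≤ ·)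
      = 0 :: (S.sort (· ≤ ·)).map (· + 1) := by
    rw [Finset.sort_insert (· ≤ ·) (fun b _ => Nat.zero_le b) h0T, sort_image_succ]
  have hsortC : ((C0.image (· + 1))).sort (· ≤ ·) = (C0.sort (· ≤ ·)).map (· + 1) :=
    sort_image_succ C0
  -- binomial products
  have hb1 : bp (k + 1) (k + 1) ((insert 0 (S.image (· + 1))).sort (· ≤ ·))
      = bp k k (S.sort (· ≤ ·)) := by
    rw [hsortL]
    show Nat.choose (k + 1) (k + 1 - 0) * bp (k + 1) (k + 1 - 0 - 1) _ = _
    simp [bp_map_succ]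
  have hb2 : (m + 1) * bp (k + 1) (k + 1) ((C0.image (· + 1)).sort (· ≤ ·))
      = (k + 1) * bp k k (C0.sort (· ≤ ·)) := by
    rw [hsortC]
    rcases hlc : C0.sort (· ≤ ·) with _ | ⟨c, t⟩
    · -- C0 empty, so S = range k, m = k
      have hC0e : C0 = ∅ := by
        ext a
        constructor
        · intro ha
          have := (Finset.mem_sort (α := ℕ) (· ≤ ·)).mpr ha
          rw [hlc] at this
          simp at this
        · simp
      have hSr : S = Finset.range k := by
        have := Finset.sdiff_eq_empty_iff_subset.mp hC0e
        exact Finset.Subset.antisymm hS this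
      have hmk : m = k := by
        have hk1 : k ∈ {r | r ∉ S} := by
          show k ∉ S
          rw [hSr]; simp
        have hle : m ≤ k := Nat.sInf_le hk1
        have hmem2 : m ∉ S := Nat.sInf_mem (⟨k, hk1⟩ : Set.Nonempty {r | r ∉ S})
        rw [hSr] at hmem2
        simp only [Finset.mem_range, not_lt] at hmem2
        omega
      rw [hmk]
      simp [bp]
    · -- c is the least element of C0, equal to m
      have hcC0 : c ∈ C0 := by
        rw [← Finset.mem_sort (α := ℕ) (· ≤ ·), hlc]
        simp
      have hck : c < k := Finset.mem_range.mp (hC0sub hcC0)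
      have hcm : c = m := by
        have h1 : m ≤ c := Nat.sInf_le (by simpa [hC0] using (Finset.mem_sdiff.mp hcC0).2)
        have hmk : m < k := lt_of_le_of_lt h1 hck
        have hmS : m ∉ S := Nat.sInf_mem
          (⟨c, by simpa [hC0] using (Finset.mem_sdiff.mp hcC0).2⟩ : Set.Nonempty {r | r ∉ S})
        have hmC0 : m ∈ C0 := by
          rw [hC0, Finset.mem_sdiff]
          exact ⟨Finset.mem_range.mpr hmk, hmS⟩
        have hmlc : m ∈ C0.sort (· ≤ ·) := (Finset.mem_sort (α := ℕ) (· ≤ ·)).mpr hmC0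
        rw [hlc] at hmlc
        rcases List.mem_cons.mp hmlc with h | h
        · omega
        · have hsorted := Finset.pairwise_sort C0 (· ≤ ·)
          rw [hlc] at hsorted
          have := List.rel_of_pairwise_cons hsorted h
          omega
      subst hcm
      show (m + 1) * bp (k + 1) (k + 1) ((m + 1) :: t.map (· + 1)) = _
      rw [bp, bp]
      have e1 : k + 1 - (m + 1) = k - m := by omega
      rw [e1, bp_map_succ]
      have := Nat.choose_mul_succ_eq k (k - m)
      have e3 : k + 1 - (k - m) = m + 1 := by omega
      rw [e3] at this
      calc (m + 1) * (Nat.choose (k + 1) (k - m) * bp k (k - m - 1) t)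
          = (Nat.choose (k + 1) (k - m) * (m + 1)) * bp k (k - m - 1) t := by ring
        _ = (Nat.choose k (k - m) * (k + 1)) * bp k (k - m - 1) t := by rw [← this]
        _ = (k + 1) * (Nat.choose k (k - m) * bp k (k - m - 1) t) := by ring
  -- denominators
  have hd1 : (∏ a ∈ insert 0 (S.image (· + 1)), ((a + 1) * (k + 1 - a)) : ℕ)
      = (k + 1) * ∏ b ∈ S, ((b + 2) * (k - b)) := by
    rw [Finset.prod_insert h0T, Finset.prod_image (by intro a _ b _ h; simpa using h),
      show ((0 : ℕ) + 1) * (k + 1 - 0) = k + 1 by omega]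
    congr 1
    refine Finset.prod_congr rfl fun b _ => ?_
    show (b + 1 + 1) * (k + 1 - (b + 1)) = (b + 2) * (k - b)
    congr 1 <;> omega
  have hd2 : (∏ a ∈ C0.image (· + 1), ((a + 1) * (k + 1 - a)) : ℕ)
      = ∏ c ∈ C0, ((c + 2) * (k - c)) := by
    rw [Finset.prod_image (by intro a _ b _ h; simpa using h)]
    refine Finset.prod_congr rfl fun c _ => ?_
    show (c + 1 + 1) * (k + 1 - (c + 1)) = (c + 2) * (k - c)
    congr 1 <;> omega
  have hd3 : (∏ b ∈ S, ((b + 2) * (k - b)) : ℕ) * ∏ c ∈ C0, ((c + 2) * (k - c))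
      = ∏ j ∈ Finset.range k, ((j + 2) * (k - j)) := by
    rw [mul_comm]; exact Finset.prod_sdiff hS
  have hd4 : (∏ b ∈ S, ((b + 1) * (k - b)) : ℕ) * ∏ c ∈ C0, ((c + 1) * (k - c))
      = ∏ j ∈ Finset.range k, ((j + 1) * (k - j)) := by
    rw [mul_comm]; exact Finset.prod_sdiff hS
  -- run factorials
  have hr1 : runFactProd (insert 0 (S.image (· + 1))) = (m + 1) * runFactProd S :=
    runFactProd_insert_shift S
  have hr2 : runFactProd (C0.image (· + 1)) = runFactProd C0 := runFactProd_image_succ C0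
  -- nonzeroness
  have hDS : ((∏ b ∈ S, ((b + 1) * (k - b)) : ℕ) : ℚ) ≠ 0 := by
    have := denom_ne_zero k S hS 0
    simpa using this
  have hDC : ((∏ c ∈ C0, ((c + 1) * (k - c)) : ℕ) : ℚ) ≠ 0 := by
    have := denom_ne_zero k C0 hC0sub 0
    simpa using this
  have hD2S : ((∏ b ∈ S, ((b + 2) * (k - b)) : ℕ) : ℚ) ≠ 0 := by
    have := denom_ne_zero k S hS 1
    simpa [add_assoc] using this
  have hD2C : ((∏ c ∈ C0, ((c + 2) * (k - c)) : ℕ) : ℚ) ≠ 0 := by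
    have := denom_ne_zero k C0 hC0sub 1
    simpa [add_assoc] using this
  have hk1 : ((k : ℚ) + 1) ≠ 0 := by positivity
  -- assemble
  have e1 : ((m : ℚ) + 1) * ((bp (k + 1) (k + 1) ((C0.image (· + 1)).sort (· ≤ ·)) : ℕ) : ℚ)
      = ((k : ℚ) + 1) * ((bp k k (C0.sort (· ≤ ·)) : ℕ) : ℚ) := by
    exact_mod_cast congrArg (Nat.cast (R := ℚ)) hb2
  have e2 : ((∏ b ∈ S, ((b + 2) * (k - b)) : ℕ) : ℚ) * ((∏ c ∈ C0, ((c + 2) * (k - c)) : ℕ) : ℚ)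
      = ((k : ℚ) + 1) * (((∏ b ∈ S, ((b + 1) * (k - b)) : ℕ) : ℚ)
        * ((∏ c ∈ C0, ((c + 1) * (k - c)) : ℕ) : ℚ)) := by
    have e2n : (∏ b ∈ S, ((b + 2) * (k - b)) : ℕ) * (∏ c ∈ C0, ((c + 2) * (k - c)) : ℕ)
        = (k + 1) * ((∏ b ∈ S, ((b + 1) * (k - b)) : ℕ) * ∏ c ∈ C0, ((c + 1) * (k - c))) := by
      rw [hd3, prod_shift_denoms, hd4]
    exact_mod_cast congrArg (Nat.cast (R := ℚ)) e2n
  rw [Gq, Gq, Gq, Gq, hr1, hr2, hb1, hd1, hd2]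
  push_cast
  push_cast at e1 e2 hDS hDC hD2S hD2C
  rw [div_mul_div_comm, div_mul_div_comm, div_mul_div_comm]
  rw [div_eq_div_iff (mul_ne_zero (mul_ne_zero hk1 hD2S) hD2C)
    (mul_ne_zero hk1 (mul_ne_zero hDS hDC))]
  set RS : ℚ := ((runFactProd S : ℕ) : ℚ)
  set RC : ℚ := ((runFactProd C0 : ℕ) : ℚ)
  set BS : ℚ := ((bp k k (S.sort (· ≤ ·)) : ℕ) : ℚ)
  set BC : ℚ := ((bp k k (C0.sort (· ≤ ·)) : ℕ) : ℚ)
  set BCs : ℚ := ((bp (k + 1) (k + 1) ((C0.image (· + 1)).sort (· ≤ ·)) : ℕ) : ℚ)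
  set DS : ℚ := ∏ b ∈ S, (((b : ℚ) + 1) * ((k - b : ℕ) : ℚ))
  set DC : ℚ := ∏ c ∈ C0, (((c : ℚ) + 1) * ((k - c : ℕ) : ℚ))
  set D2S : ℚ := ∏ b ∈ S, (((b : ℚ) + 2) * ((k - b : ℕ) : ℚ))
  set D2C : ℚ := ∏ c ∈ C0, (((c : ℚ) + 2) * ((k - c : ℕ) : ℚ))
  linear_combination (RS * BS * RC * ((k : ℚ) + 1) * DS * DC) * e1
    - (RS * BS * RC * BC * ((k : ℚ) + 1)) * e2

lemma main_lemma : ∀ k : ℕ, ∀ L : Finset ℕ, L ⊆ Finset.range k →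
    Gq k L * Gq k (Finset.range k \ L) = 1 / (Nat.factorial k : ℚ) := by
  intro k
  induction k with
  | zero =>
    intro L hL
    have : L = ∅ := Finset.subset_empty.mp (by simpa using hL)
    subst this
    simp [Gq, runFactProd, bp]
  | succ k ih =>
    intro L hL
    classical
    set S := (Finset.range k).filter (fun b => b + 1 ∈ L) with hSdef
    have hS : S ⊆ Finset.range k := Finset.filter_subset _ _
    by_cases h0 : (0 : ℕ) ∈ L
    · have hL1 : insert 0 (S.image (· + 1)) = L := by
        ext a
        simp only [Finset.mem_insert, mem_image_succ, hSdef, Finset.mem_filter,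
          Finset.mem_range]
        constructor
        · rintro (rfl | ⟨h1, _, h3⟩)
          · exact h0
          · rwa [show a - 1 + 1 = a by omega] at h3
        · intro ha
          rcases Nat.eq_zero_or_pos a with rfl | hpos
          · exact Or.inl rfl
          · have hak := Finset.mem_range.mp (hL ha)
            exact Or.inr ⟨by omega, by omega, by rwa [show a - 1 + 1 = a by omega]⟩
      have hL2 : (Finset.range k \ S).image (· + 1) = Finset.range (k + 1) \ L := by
        ext a
        simp only [mem_image_succ, Finset.mem_sdiff, hSdef, Finset.mem_filter,
          Finset.mem_range]
        constructor
        · rintro ⟨h1, h2, h3⟩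
          refine ⟨by omega, fun ha => h3 ⟨h2, by rwa [show a - 1 + 1 = a by omega]⟩⟩
        · rintro ⟨h1, h2⟩
          have ha0 : a ≠ 0 := by rintro rfl; exact h2 h0
          refine ⟨by omega, by omega, ?_⟩
          rintro ⟨_, h3⟩
          exact h2 (by rwa [show a - 1 + 1 = a by omega] at h3)
      rw [← hL2, ← hL1, step_lemma k S hS, ih S hS, Nat.factorial_succ]
      push_cast
      rw [div_mul_div_comm]
      congr 1
      ring
    · have hL1 : S.image (· + 1) = L := by
        ext a
        simp only [mem_image_succ, hSdef, Finset.mem_filter, Finset.mem_range]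
        constructor
        · rintro ⟨h1, _, h3⟩
          rwa [show a - 1 + 1 = a by omega] at h3
        · intro ha
          have ha0 : a ≠ 0 := by rintro rfl; exact h0 ha
          have hak := Finset.mem_range.mp (hL ha)
          exact ⟨by omega, by omega, by rwa [show a - 1 + 1 = a by omega]⟩
      have hL2 : insert 0 ((Finset.range k \ S).image (· + 1)) = Finset.range (k + 1) \ L := by
        ext a
        simp only [Finset.mem_insert, mem_image_succ, Finset.mem_sdiff, hSdef,
          Finset.mem_filter, Finset.mem_range]
        constructor
        · rintro (rfl | ⟨h1, h2, h3⟩)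
          · exact ⟨by omega, h0⟩
          · refine ⟨by omega, fun ha => h3 ⟨h2, by rwa [show a - 1 + 1 = a by omega]⟩⟩
        · rintro ⟨h1, h2⟩
          rcases Nat.eq_zero_or_pos a with rfl | hpos
          · exact Or.inl rfl
          · refine Or.inr ⟨by omega, by omega, ?_⟩
            rintro ⟨_, h3⟩
            exact h2 (by rwa [show a - 1 + 1 = a by omega] at h3)
      have hstep := step_lemma k (Finset.range k \ S) Finset.sdiff_subset
      rw [Finset.sdiff_sdiff_eq_self hS, hL1, hL2] at hstep
      rw [mul_comm] at hstep
      rw [hstep, mul_comm (Gq k (Finset.range k \ S)) (Gq k S), ih S hS,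
        Nat.factorial_succ]
      push_cast
      rw [div_mul_div_comm]
      congr 1
      ring

lemma side_eq (n : ℕ) (A : Finset ℕ) (hn : A.card = n) (f : ℕ → ℕ)
    (hmono : ∀ i j, i < j → j < n → f i < f j)
    (hmem : ∀ i, i < n → f i ∈ A) :
    ∀ i < n, f i = (A.sort (· ≤ ·)).getD i 0 := by
  have hlen : (A.sort (· ≤ ·)).length = n := by rw [Finset.length_sort, hn]
  have hf : (fun i : Fin n => f i) = A.orderEmbOfFin hn := by
    refine Finset.orderEmbOfFin_unique hn (fun i => hmem i i.2) ?_
    intro i j hij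
    exact hmono i j hij j.2
  intro i hi
  have h1 : f i = A.orderEmbOfFin hn ⟨i, hi⟩ := congrFun hf ⟨i, hi⟩
  rw [h1, Finset.orderEmbOfFin_apply, List.getD_eq_getElem _ _ (by rw [hlen]; exact hi)]
  rfl

theorem run_binomial_product_eq_one_div_factorial
    (k s : ℕ) (hk : 0 < k) (L : Finset ℕ) (hL : L ⊆ Finset.range k)
    (hs : L.card = s)
    (ℓ ℓ' : ℕ → ℕ)
    (hmono : ∀ i j, i < j → j < s → ℓ i < ℓ j)
    (hmem : ∀ i, i < s → ℓ i ∈ L)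
    (hmono' : ∀ i j, i < j → j < k - s → ℓ' i < ℓ' j)
    (hmem' : ∀ i, i < k - s → ℓ' i ∈ Finset.range k \ L) :
    ((runFactProd L : ℚ) *
        (∏ i ∈ Finset.range s,
          Nat.choose (if i = 0 then k else k - ℓ (i - 1) - 1) (k - ℓ i) : ℕ) /
        (∏ i ∈ Finset.range s, ((ℓ i + 1) * (k - ℓ i)) : ℕ)) *
      ((runFactProd (Finset.range k \ L) : ℚ) *
        (∏ i ∈ Finset.range (k - s),
          Nat.choose (if i = 0 then k else k - ℓ' (i - 1) - 1) (k - ℓ' i) : ℕ) /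
        (∏ i ∈ Finset.range (k - s), ((ℓ' i + 1) * (k - ℓ' i)) : ℕ)) =
      1 / (k.factorial : ℚ) := by
  classical
  have hcard : (Finset.range k \ L).card = k - s := by
    rw [Finset.card_sdiff_of_subset hL, Finset.card_range, hs]
  have hlenL : (L.sort (· ≤ ·)).length = s := by rw [Finset.length_sort, hs]
  have hlenC : ((Finset.range k \ L).sort (· ≤ ·)).length = k - s := by
    rw [Finset.length_sort, hcard]
  have hl1 := side_eq s L hs ℓ hmono hmem
  have hl2 := side_eq (k - s) (Finset.range k \ L) hcard ℓ' hmono' hmem'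
  have hprod1 : (∏ i ∈ Finset.range s,
      Nat.choose (if i = 0 then k else k - ℓ (i - 1) - 1) (k - ℓ i))
      = bp k k (L.sort (· ≤ ·)) := by
    rw [show s = (L.sort (· ≤ ·)).length from hlenL.symm, ← prod_eq_bp k (L.sort (· ≤ ·)) k]
    refine Finset.prod_congr rfl fun i hi => ?_
    have hi' : i < s := by rw [← hlenL]; exact Finset.mem_range.mp hi
    rcases Nat.eq_zero_or_pos i with rfl | hpos
    · rw [hl1 0 (by omega)]
    · rw [if_neg hpos.ne', if_neg hpos.ne', hl1 i hi', hl1 (i - 1) (by omega)]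
  have hden1 : (∏ i ∈ Finset.range s, ((ℓ i + 1) * (k - ℓ i)))
      = ∏ a ∈ L, ((a + 1) * (k - a)) := by
    rw [show s = (L.sort (· ≤ ·)).length from hlenL.symm]
    have hcong : ∀ i ∈ Finset.range (L.sort (· ≤ ·)).length,
        ((ℓ i + 1) * (k - ℓ i))
          = (((L.sort (· ≤ ·)).getD i 0 + 1) * (k - (L.sort (· ≤ ·)).getD i 0)) := by
      intro i hi
      rw [hl1 i (by rw [← hlenL]; exact Finset.mem_range.mp hi)]
    have hgd := prod_getD (fun a => (a + 1) * (k - a)) (L.sort (· ≤ ·))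
    have hsm := sort_map_prod L (fun a => (a + 1) * (k - a))
    beta_reduce at hgd hsm
    rw [Finset.prod_congr rfl hcong, hgd, hsm]
  have hprod2 : (∏ i ∈ Finset.range (k - s),
      Nat.choose (if i = 0 then k else k - ℓ' (i - 1) - 1) (k - ℓ' i))
      = bp k k ((Finset.range k \ L).sort (· ≤ ·)) := by
    rw [show k - s = ((Finset.range k \ L).sort (· ≤ ·)).length from hlenC.symm,
      ← prod_eq_bp k ((Finset.range k \ L).sort (· ≤ ·)) k]
    refine Finset.prod_congr rfl fun i hi => ?_
    have hi' : i < k - s := by rw [← hlenC]; exact Finset.mem_range.mp hi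
    rcases Nat.eq_zero_or_pos i with rfl | hpos
    · rw [hl2 0 (by omega)]
    · rw [if_neg hpos.ne', if_neg hpos.ne', hl2 i hi', hl2 (i - 1) (by omega)]
  have hden2 : (∏ i ∈ Finset.range (k - s), ((ℓ' i + 1) * (k - ℓ' i)))
      = ∏ a ∈ Finset.range k \ L, ((a + 1) * (k - a)) := by
    rw [show k - s = ((Finset.range k \ L).sort (· ≤ ·)).length from hlenC.symm]
    have hcong : ∀ i ∈ Finset.range ((Finset.range k \ L).sort (· ≤ ·)).length,
        ((ℓ' i + 1) * (k - ℓ' i))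
          = ((((Finset.range k \ L).sort (· ≤ ·)).getD i 0 + 1)
              * (k - ((Finset.range k \ L).sort (· ≤ ·)).getD i 0)) := by
      intro i hi
      rw [hl2 i (by rw [← hlenC]; exact Finset.mem_range.mp hi)]
    have hgd := prod_getD (fun a => (a + 1) * (k - a)) ((Finset.range k \ L).sort (· ≤ ·))
    have hsm := sort_map_prod (Finset.range k \ L) (fun a => (a + 1) * (k - a))
    beta_reduce at hgd hsm
    rw [Finset.prod_congr rfl hcong, hgd, hsm]
  have hmain := main_lemma k L hL
  rw [Gq, Gq] at hmain
  rw [hprod1, hden1, hprod2, hden2, ← hmain]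
  push_cast
  ring
end

section
/- Fix integers k > ℓ ≥ 0 and ℓ < u ≤ k. Define for integers n ≥ 2k+u the quantity P(n) = ∑_{j=0}^{k-ℓ} (-1)^j C(u,j) C(k-u, k-ℓ-j) C(n-k-u, k-ℓ-j). Then P(n) / n^{k-u} converges to (-1)^{u-ℓ} C(u,ℓ) / (k-u)! as n → ∞. -/
open Filter

private lemma choose_div_pow_tendsto (c m : ℕ) :
    Tendsto (fun n : ℕ => ((n - c).choose m : ℚ) / (n : ℚ) ^ m) atTop
      (nhds (1 / m.factorial)) := by
  have key : ∀ᶠ n : ℕ in atTop,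
      ((n - c).choose m : ℚ) / (n : ℚ) ^ m =
        (∏ i ∈ Finset.range m, (1 - ((c : ℚ) + i) / n)) / m.factorial := by
    filter_upwards [eventually_ge_atTop (c + m + 1)] with n hn
    have hn0 : (n : ℚ) ≠ 0 := by
      have : 0 < n := by omega
      positivity
    have hd : ((n - c).descFactorial m : ℚ) = ∏ i ∈ Finset.range m, ((n : ℚ) - c - i) := by
      rw [Nat.descFactorial_eq_prod_range]
      push_cast [Nat.cast_prod]
      refine Finset.prod_congr rfl fun i hi => ?_
      have hi' : i < m := Finset.mem_range.mp hi
      have h1 : c ≤ n := by omega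
      have h2 : i ≤ n - c := by omega
      rw [Nat.cast_sub h2, Nat.cast_sub h1]
    have hch : ((n - c).choose m : ℚ) = ((n - c).descFactorial m : ℚ) / m.factorial := by
      have h := Nat.descFactorial_eq_factorial_mul_choose (n - c) m
      have h' : ((n - c).descFactorial m : ℚ) = (m.factorial : ℚ) * ((n - c).choose m : ℚ) := by
        exact_mod_cast congrArg (Nat.cast : ℕ → ℚ) h
      rw [h']
      field_simp
    have hprod : ∏ i ∈ Finset.range m, (1 - ((c : ℚ) + i) / n) =
        (∏ i ∈ Finset.range m, ((n : ℚ) - c - i)) / (n : ℚ) ^ m := by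
      rw [show ((n : ℚ) ^ m) = ∏ _i ∈ Finset.range m, (n : ℚ) by
        simp [Finset.prod_const], ← Finset.prod_div_distrib]
      refine Finset.prod_congr rfl fun i _ => ?_
      field_simp
      ring
    rw [hch, hprod, hd, div_div, div_div, mul_comm ((m.factorial : ℚ))]
  rw [tendsto_congr' key]
  have hone : Tendsto (fun n : ℕ => ∏ i ∈ Finset.range m, (1 - ((c : ℚ) + i) / n)) atTop
      (nhds 1) := by
    have h := tendsto_finset_prod (f := fun (i : ℕ) (n : ℕ) => (1 - ((c : ℚ) + i) / n))
      (a := fun _ => (1 : ℚ)) (x := atTop) (Finset.range m) (fun i _ => by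
        have h0 : Tendsto (fun n : ℕ => ((c : ℚ) + i) / n) atTop (nhds 0) :=
          Tendsto.div_atTop tendsto_const_nhds tendsto_natCast_atTop_atTop
        simpa using tendsto_const_nhds.sub h0)
    simpa using h
  simpa using hone.div_const (m.factorial : ℚ)

private lemma choose_div_pow_tendsto_zero (c m d : ℕ) (h : m < d) :
    Tendsto (fun n : ℕ => ((n - c).choose m : ℚ) / (n : ℚ) ^ d) atTop (nhds 0) := by
  have key : ∀ᶠ n : ℕ in atTop,
      ((n - c).choose m : ℚ) / (n : ℚ) ^ d =
        (((n - c).choose m : ℚ) / (n : ℚ) ^ m) * ((n : ℚ) ^ (d - m))⁻¹ := by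
    filter_upwards [eventually_ge_atTop 1] with n hn
    have hn0 : (n : ℚ) ≠ 0 := by
      have : 0 < n := hn
      positivity
    have hp : (n : ℚ) ^ d = (n : ℚ) ^ m * (n : ℚ) ^ (d - m) := by
      rw [← pow_add]; congr 1; omega
    rw [hp]; ring
  rw [tendsto_congr' key]
  have h2 : Tendsto (fun n : ℕ => ((n : ℚ) ^ (d - m))⁻¹) atTop (nhds 0) :=
    ((tendsto_pow_atTop (by omega : d - m ≠ 0)).comp
      tendsto_natCast_atTop_atTop).inv_tendsto_atTop
  simpa using (choose_div_pow_tendsto c m).mul h2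

theorem eigen_sum_asymptotics_large_u (k ℓ u : ℕ) (hℓk : ℓ < k)
    (hu : ℓ < u) (huk : u ≤ k) :
    Tendsto
      (fun n : ℕ =>
        (∑ j ∈ Finset.range (k - ℓ + 1),
            (-1 : ℚ) ^ j * (u.choose j) * ((k - u).choose (k - ℓ - j)) *
              ((n - k - u).choose (k - ℓ - j))) /
          (n : ℚ) ^ (k - u))
      atTop
      (nhds ((-1 : ℚ) ^ (u - ℓ) * (u.choose ℓ : ℚ) / (k - u).factorial)) := by
  set T : ℚ := (-1 : ℚ) ^ (u - ℓ) * (u.choose ℓ : ℚ) / (k - u).factorial with hT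
  have key : Tendsto (fun n : ℕ => ∑ j ∈ Finset.range (k - ℓ + 1),
      ((-1 : ℚ) ^ j * (u.choose j) * ((k - u).choose (k - ℓ - j)) *
        ((n - k - u).choose (k - ℓ - j)) / (n : ℚ) ^ (k - u)))
      atTop (nhds (∑ j ∈ Finset.range (k - ℓ + 1), if j = u - ℓ then T else 0)) := by
    refine tendsto_finset_sum _ fun j hj => ?_
    have hj' : j ≤ k - ℓ := by
      have := Finset.mem_range.mp hj; omega
    have hsub : ∀ n : ℕ, n - k - u = n - (k + u) := fun n => by omega
    rcases lt_trichotomy j (u - ℓ) with hlt | heq | hgt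
    · have hz : (k - u).choose (k - ℓ - j) = 0 := Nat.choose_eq_zero_of_lt (by omega)
      rw [if_neg (by omega)]
      simp only [hz]
      simpa using tendsto_const_nhds (α := ℚ) (f := atTop (α := ℕ))
    · have he : k - ℓ - (u - ℓ) = k - u := by omega
      rw [if_pos heq]
      have hcs : u.choose (u - ℓ) = u.choose ℓ := Nat.choose_symm (le_of_lt hu)
      have h1 := (choose_div_pow_tendsto (k + u) (k - u)).const_mul
        ((-1 : ℚ) ^ (u - ℓ) * (u.choose ℓ : ℚ))
      have : T = ((-1 : ℚ) ^ (u - ℓ) * (u.choose ℓ : ℚ)) * (1 / (k - u).factorial) := by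
        rw [hT]; ring
      rw [this]
      refine Tendsto.congr (fun n => ?_) h1
      simp only [heq, he, hsub, hcs, Nat.choose_self, Nat.cast_one, mul_one]
      ring
    · rw [if_neg (by omega)]
      have hlt2 : k - ℓ - j < k - u := by omega
      have h1 := (choose_div_pow_tendsto_zero (k + u) (k - ℓ - j) (k - u) hlt2).const_mul
        ((-1 : ℚ) ^ j * (u.choose j : ℚ) * ((k - u).choose (k - ℓ - j) : ℚ))
      rw [mul_zero] at h1
      refine Tendsto.congr (fun n => ?_) h1
      rw [hsub n, mul_div_assoc]
  have hmem : u - ℓ ∈ Finset.range (k - ℓ + 1) := Finset.mem_range.mpr (by omega)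
  rw [Finset.sum_ite_eq' (Finset.range (k - ℓ + 1)) (u - ℓ) (fun _ => T), if_pos hmem] at key
  refine Tendsto.congr (fun n => ?_) key
  rw [Finset.sum_div]
end

section
/- Let G be a finite graph on n vertices and F a field. Then minrank_F(G) · minrank_F(G^c) ≥ n, where G^c is the complement graph. -/
open Matrix Module

/-- Rank factorization: any matrix of rank `r` factors as a product of an
`m × r` and an `r × k` matrix. -/
lemma exists_factorization {F : Type*} [Field F] {m k : ℕ} (A : Matrix (Fin m) (Fin k) F) :
    ∃ (C : Matrix (Fin m) (Fin A.rank) F) (D : Matrix (Fin A.rank) (Fin k) F), A = C * D := by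
  set S := Submodule.span F (Set.range Aᵀ) with hS
  have hrank : A.rank = finrank F S := A.rank_eq_finrank_span_cols
  have : FiniteDimensional F S := FiniteDimensional.span_of_finite F (Set.finite_range _)
  let b : Basis (Fin (finrank F S)) F S := finBasis F S
  have hv : ∀ j, Aᵀ j ∈ S := fun j => Submodule.subset_span (Set.mem_range_self j)
  let v : Fin k → S := fun j => ⟨Aᵀ j, hv j⟩
  refine ⟨fun i p => (b (Fin.cast hrank p) : Fin m → F) i,
    fun p j => b.repr (v j) (Fin.cast hrank p), ?_⟩
  ext i j
  have := b.sum_repr (v j)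
  have h2 : ∀ x : Fin m, (∑ p, b.repr (v j) p • b p : S).1 x = A x j := by
    rw [this]; intro x; rfl
  have h3 := h2 i
  simp only [Submodule.coe_sum, SetLike.val_smul, Finset.sum_apply, Pi.smul_apply,
    smul_eq_mul] at h3
  erw [Matrix.mul_apply, ← h3]
  rw [← (Fin.castOrderIso hrank).toEquiv.sum_comp]
  simp [mul_comm]

/-- The rank of a Hadamard (entrywise) product is at most the product of ranks. -/
lemma rank_hadamard_le {F : Type*} [Field F] {m k : ℕ} (A B : Matrix (Fin m) (Fin k) F) :
    (A ⊙ B).rank ≤ A.rank * B.rank := by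
  obtain ⟨CA, DA, hA⟩ := exists_factorization A
  obtain ⟨CB, DB, hB⟩ := exists_factorization B
  let C : Matrix (Fin m) (Fin A.rank × Fin B.rank) F := fun i pq => CA i pq.1 * CB i pq.2
  let D : Matrix (Fin A.rank × Fin B.rank) (Fin k) F := fun pq j => DA pq.1 j * DB pq.2 j
  have hfac : A ⊙ B = C * D := by
    ext i j
    simp only [Matrix.hadamard_apply, Matrix.mul_apply, hA, hB, C, D]
    erw [Matrix.mul_apply]
    rw [← Finset.univ_product_univ, Finset.sum_product, Finset.sum_mul_sum]
    apply Finset.sum_congr rfl; intro p _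
    apply Finset.sum_congr rfl; intro q _
    ring
  calc (A ⊙ B).rank = (C * D).rank := by rw [hfac]
    _ ≤ C.rank := rank_mul_le_left C D
    _ ≤ Fintype.card (Fin A.rank × Fin B.rank) := rank_le_card_width C
    _ = A.rank * B.rank := by simp

/-- The minrank of a graph `G` on `n` vertices over a field `F`: the minimum
rank of an `n × n` matrix over `F` with nonzero diagonal entries and zero
entries at all off-diagonal non-edges. -/
noncomputable def minrank (F : Type*) [Field F] {n : ℕ} (G : SimpleGraph (Fin n)) : ℕ :=
  sInf {r | ∃ M : Matrix (Fin n) (Fin n) F,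
    (∀ i, M i i ≠ 0) ∧ (∀ i j, i ≠ j → ¬G.Adj i j → M i j = 0) ∧ M.rank = r}

theorem minrank_mul_minrank_compl_ge (F : Type*) [Field F] (n : ℕ)
    (G : SimpleGraph (Fin n)) :
    n ≤ minrank F G * minrank F Gᶜ := by
  classical
  have hne : ∀ H : SimpleGraph (Fin n), {r | ∃ M : Matrix (Fin n) (Fin n) F,
      (∀ i, M i i ≠ 0) ∧ (∀ i j, i ≠ j → ¬H.Adj i j → M i j = 0) ∧ M.rank = r}.Nonempty := by
    intro H
    exact ⟨(1 : Matrix (Fin n) (Fin n) F).rank, 1, fun i => by simp,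
      fun i j hij _ => Matrix.one_apply_ne hij, rfl⟩
  obtain ⟨M, hMd, hMo, hMr⟩ := Nat.sInf_mem (hne G)
  obtain ⟨N, hNd, hNo, hNr⟩ := Nat.sInf_mem (hne Gᶜ)
  have hdiag : M ⊙ N = Matrix.diagonal (fun i => M i i * N i i) := by
    ext i j
    by_cases h : i = j
    · subst h; simp [Matrix.hadamard_apply]
    · rw [Matrix.hadamard_apply, Matrix.diagonal_apply_ne _ h]
      by_cases hadj : G.Adj i j
      · rw [hNo i j h (by simp [hadj]), mul_zero]
      · rw [hMo i j h hadj, zero_mul]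
  have hr : (M ⊙ N).rank = n := by
    rw [hdiag, Matrix.rank_diagonal]
    rw [Fintype.card_of_subtype Finset.univ
      (fun i => by simp [mul_ne_zero (hMd i) (hNd i)])]
    simp
  calc (n : ℕ) = (M ⊙ N).rank := hr.symm
    _ ≤ M.rank * N.rank := rank_hadamard_le M N
    _ = minrank F G * minrank F Gᶜ := by rw [hMr, hNr]; rfl
end

section
/- Let q be a prime power, k a positive integer with q ≤ k+1, and let F be a family of k-element subsets of {1,...,n} such that for all distinct A, B ∈ F, |A ∩ B| is not congruent to k modulo q. Then |F| ≤ C(n, q-1). -/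
open Finset Matrix



lemma aux_choose_digit {p : ℕ} [hf : Fact p.Prime] {r : ℕ} (hr : r < p) :
    ((r.choose (p-1) : ZMod p) ≠ 0) ↔ r = p - 1 := by
  rcases eq_or_ne r (p-1) with h | h
  · subst h; simp [Nat.choose_self]
  · have hlt : r < p - 1 := by omega
    simp [Nat.choose_eq_zero_of_lt hlt, h]

lemma aux_mod_div_mul {p P : ℕ} (hp : 0 < p) (hP : 0 < P) :
    (p * P - 1) % p = p - 1 ∧ (p * P - 1) / p = P - 1 := by
  obtain ⟨P', rfl⟩ : ∃ P', P = P' + 1 := ⟨P - 1, by omega⟩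
  have h : p * (P' + 1) - 1 = (p - 1) + p * P' := by rw [Nat.mul_succ]; omega
  rw [h, Nat.add_mul_mod_self_left, Nat.add_mul_div_left _ _ hp,
    Nat.mod_eq_of_lt (by omega), Nat.div_eq_of_lt (by omega)]
  omega

lemma aux_step {p P : ℕ} (hp : 1 < p) (t : ℕ) :
    (t % p = p - 1 ∧ P ∣ (t / p + 1)) ↔ p * P ∣ (t + 1) := by
  constructor
  · rintro ⟨h1, s, hs⟩
    have hmd := Nat.mod_add_div t p
    refine ⟨s, ?_⟩
    have h2 : t + 1 = p * (t / p + 1) := by rw [Nat.mul_add, Nat.mul_one]; omega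
    rw [h2, hs, mul_assoc]
  · rintro ⟨s, hs⟩
    have hs' : t + 1 = p * (P * s) := by rw [hs]; ring
    have hne : P * s ≠ 0 := by
      intro h; rw [h, Nat.mul_zero] at hs'; omega
    obtain ⟨w', hw'⟩ : ∃ w', P * s = w' + 1 := ⟨P * s - 1, by omega⟩
    rw [hw'] at hs'
    have ht : t = (p - 1) + p * w' := by rw [Nat.mul_succ] at hs'; omega
    have hmod : t % p = p - 1 := by
      rw [ht, Nat.add_mul_mod_self_left, Nat.mod_eq_of_lt (by omega)]
    have hdiv : t / p = w' := by
      rw [ht, Nat.add_mul_div_left _ _ (by omega : 0 < p),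
        Nat.div_eq_of_lt (by omega), Nat.zero_add]
    exact ⟨hmod, ⟨s, by omega⟩⟩

lemma lucas_pow {p : ℕ} [hf : Fact p.Prime] (m : ℕ) : ∀ t : ℕ,
    ((t.choose (p ^ m - 1) : ZMod p) ≠ 0) ↔ p ^ m ∣ (t + 1) := by
  have hp1 : 1 < p := hf.out.one_lt
  induction m with
  | zero => intro t; simp
  | succ m ih =>
    intro t
    have hpow : 0 < p ^ m := Nat.pow_pos (by omega)
    have hps : p ^ (m+1) = p * p ^ m := by rw [pow_succ, mul_comm]
    obtain ⟨hmod, hdiv⟩ := aux_mod_div_mul (by omega : 0 < p) hpow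
    have lucas := Choose.choose_modEq_choose_mod_mul_choose_div_nat
      (n := t) (k := p ^ (m+1) - 1) (p := p)
    rw [hps, hmod, hdiv] at lucas
    have hcast : ((t.choose (p * p ^ m - 1) : ZMod p)) =
        (((t % p).choose (p-1) * ((t / p).choose (p ^ m - 1)) : ℕ) : ZMod p) :=
      (ZMod.natCast_eq_natCast_iff _ _ _).mpr lucas
    rw [hps, hcast]
    push_cast
    rw [mul_ne_zero_iff, aux_choose_digit (Nat.mod_lt _ (by omega)), ih (t / p)]
    exact aux_step hp1 t


lemma aux_count1 {n j : ℕ} (C : Finset (Fin n)) :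
    ((powersetCard j (univ : Finset (Fin n))).filter (fun S => S ⊆ C)).card
      = C.card.choose j := by
  have h : (powersetCard j (univ : Finset (Fin n))).filter (fun S => S ⊆ C)
      = powersetCard j C := by
    ext S
    simp only [mem_filter, mem_powersetCard, subset_univ, true_and]
    tauto
  rw [h, card_powersetCard]

lemma aux_count2 {α : Type*} [DecidableEq α] {S A : Finset α} (h : S ⊆ A) {d : ℕ}
    (hd : S.card ≤ d) :
    ((powersetCard d A).filter (fun T => S ⊆ T)).card
      = (A.card - S.card).choose (d - S.card) := by
  rw [← card_sdiff_of_subset h, ← card_powersetCard (d - S.card) (A \ S)]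
  apply Finset.card_bij' (fun T _ => T \ S) (fun U _ => U ∪ S)
  · intro T hT
    simp only [mem_filter, mem_powersetCard] at hT
    obtain ⟨⟨hTA, hTc⟩, hST⟩ := hT
    simp only [mem_powersetCard]
    exact ⟨sdiff_subset_sdiff hTA Subset.rfl, by rw [card_sdiff_of_subset hST, hTc]⟩
  · intro U hU
    simp only [mem_powersetCard] at hU
    obtain ⟨hUA, hUc⟩ := hU
    have hdisj : Disjoint U S := by
      refine Finset.disjoint_left.mpr ?_
      intro a haU haS
      exact (Finset.mem_sdiff.mp (hUA haU)).2 haS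
    simp only [mem_filter, mem_powersetCard]
    refine ⟨⟨union_subset (hUA.trans (sdiff_subset)) h, ?_⟩, subset_union_right⟩
    rw [card_union_of_disjoint hdisj, hUc]
    omega
  · intro T hT
    simp only [mem_filter, mem_powersetCard] at hT
    exact sdiff_union_of_subset hT.2
  · intro U hU
    simp only [mem_powersetCard] at hU
    have hdisj : Disjoint U S := by
      refine Finset.disjoint_left.mpr ?_
      intro a haU haS
      exact (Finset.mem_sdiff.mp (hU.1 haU)).2 haS
    rw [union_sdiff_cancel_right hdisj]


section FWMatrix

variable {n : ℕ}

noncomputable def fwNj (j : ℕ) (F : Finset (Finset (Fin n))) :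
    Matrix {A // A ∈ F} {S // S ∈ powersetCard j (univ : Finset (Fin n))} ℚ :=
  fun A S => if S.1 ⊆ A.1 then 1 else 0

noncomputable def fwP (q j : ℕ) :
    Matrix {T // T ∈ powersetCard (q-1) (univ : Finset (Fin n))}
      {S // S ∈ powersetCard j (univ : Finset (Fin n))} ℚ :=
  fun T S => if S.1 ⊆ T.1 then 1 else 0

lemma fwNj_gram (j : ℕ) (F : Finset (Finset (Fin n))) (A B : {A // A ∈ F}) :
    (fwNj j F * (fwNj j F)ᵀ) A B = (((A.1 ∩ B.1).card.choose j : ℕ) : ℚ) := by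
  rw [Matrix.mul_apply]
  have h : ∀ S : {S // S ∈ powersetCard j (univ : Finset (Fin n))},
      fwNj j F A S * (fwNj j F)ᵀ S B
        = if S.1 ⊆ A.1 ∩ B.1 then (1 : ℚ) else 0 := by
    intro S
    simp only [fwNj, Matrix.transpose_apply, subset_inter_iff]
    split_ifs with h1 h2 h3 <;> simp_all
  rw [Finset.sum_congr rfl (fun S _ => h S),
    Finset.sum_coe_sort (powersetCard j (univ : Finset (Fin n)))
      (fun S => if S ⊆ A.1 ∩ B.1 then (1 : ℚ) else 0),
    Finset.sum_boole, aux_count1]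

lemma fwN_path (q j k : ℕ) (hj : j ≤ q - 1) (F : Finset (Finset (Fin n)))
    (hcard : ∀ A ∈ F, A.card = k) :
    fwNj (q-1) F * fwP (n := n) q j = (((k - j).choose (q - 1 - j) : ℕ) : ℚ) • fwNj j F := by
  ext A S
  have hScard : S.1.card = j := (mem_powersetCard.mp S.2).2
  have hAcard : A.1.card = k := hcard A.1 A.2
  rw [Matrix.mul_apply, Matrix.smul_apply]
  have h : ∀ T : {T // T ∈ powersetCard (q-1) (univ : Finset (Fin n))},
      fwNj (q-1) F A T * fwP q j T S
        = if T.1 ⊆ A.1 ∧ S.1 ⊆ T.1 then (1 : ℚ) else 0 := by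
    intro T
    simp only [fwNj, fwP]
    split_ifs with h1 h2 h3 <;> simp_all
  rw [Finset.sum_congr rfl (fun T _ => h T),
    Finset.sum_coe_sort (powersetCard (q-1) (univ : Finset (Fin n)))
      (fun T => if T ⊆ A.1 ∧ S.1 ⊆ T then (1 : ℚ) else 0),
    Finset.sum_boole]
  by_cases hSA : S.1 ⊆ A.1
  · have hfil : (powersetCard (q-1) (univ : Finset (Fin n))).filter
        (fun T => T ⊆ A.1 ∧ S.1 ⊆ T)
        = (powersetCard (q-1) A.1).filter (fun T => S.1 ⊆ T) := by
      ext T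
      simp only [mem_filter, mem_powersetCard, subset_univ, true_and]
      tauto
    rw [hfil, aux_count2 hSA (by omega), hScard, hAcard]
    simp only [fwNj, if_pos hSA, smul_eq_mul, mul_one]
  · have hfil : (powersetCard (q-1) (univ : Finset (Fin n))).filter
        (fun T => T ⊆ A.1 ∧ S.1 ⊆ T) = ∅ := by
      rw [Finset.filter_eq_empty_iff]
      intro T _
      rintro ⟨h1, h2⟩
      exact hSA (h2.trans h1)
    rw [hfil]
    simp only [fwNj, if_neg hSA, smul_eq_mul, mul_zero, Finset.card_empty, Nat.cast_zero]

end FWMatrix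

/-- Frankl–Wilson: if `q` is a prime power, `q ≤ k + 1`, and `F` is a family of
`k`-subsets of `{1,...,n}` with `|A ∩ B| ≢ k (mod q)` for all distinct `A, B ∈ F`,
then `|F| ≤ C(n, q-1)`. -/
theorem frankl_wilson (n k q : ℕ) (hk : 0 < k) (hq : q ≤ k + 1)
    (hqpp : ∃ p m : ℕ, p.Prime ∧ 0 < m ∧ q = p ^ m)
    (F : Finset (Finset (Fin n)))
    (hcard : ∀ A ∈ F, A.card = k)
    (hint : ∀ A ∈ F, ∀ B ∈ F, A ≠ B → ¬((A ∩ B).card ≡ k [MOD q])) :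
    F.card ≤ n.choose (q - 1) := by
  classical
  obtain ⟨p, mm, hp, hmm, hqe⟩ := hqpp
  haveI : Fact p.Prime := ⟨hp⟩
  have hp2 : 2 ≤ p := hp.two_le
  have hq2 : 2 ≤ q := by
    rw [hqe]; calc 2 ≤ p := hp2
    _ ≤ p ^ mm := Nat.le_self_pow (by omega) p
  set m0 := (q - 1) * (k + 1) with hm0
  -- key arithmetic identity
  have hm0k : m0 + 1 + k = q * (k + 1) := by
    have h1 : (q - 1) * (k + 1) = q * (k + 1) - (k + 1) := by
      rw [Nat.sub_mul, Nat.one_mul]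
    have h2 : (k + 1) ≤ q * (k + 1) := Nat.le_mul_of_pos_left _ (by omega)
    omega
  by_contra hcon
  push_neg at hcon
  -- the main square matrix over ℚ
  set M : Matrix {A // A ∈ F} {A // A ∈ F} ℚ :=
    fun A B => ((((A.1 ∩ B.1).card + m0).choose (q-1) : ℕ) : ℚ) with hM
  -- integer and mod-p versions
  set Mz : Matrix {A // A ∈ F} {A // A ∈ F} ℤ :=
    fun A B => ((((A.1 ∩ B.1).card + m0).choose (q-1) : ℕ) : ℤ) with hMz
  -- Step 1: M decomposes as a sum of Gram matrices
  have hMsum : M = ∑ j ∈ range q, ((m0.choose (q-1-j) : ℕ) : ℚ) • (fwNj j F * (fwNj j F)ᵀ) := by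
    ext A B
    rw [Matrix.sum_apply]
    have hv := Nat.add_choose_eq ((A.1 ∩ B.1).card) m0 (q-1)
    rw [Finset.Nat.sum_antidiagonal_eq_sum_range_succ
      (fun a b => Nat.choose ((A.1 ∩ B.1).card) a * Nat.choose m0 b)] at hv
    have hq1 : (q - 1).succ = q := by omega
    rw [hq1] at hv
    simp only [hM, hv]
    push_cast
    refine Finset.sum_congr rfl ?_
    intro j _
    rw [Matrix.smul_apply, fwNj_gram, smul_eq_mul]
    push_cast
    ring
  -- Step 2: each Gram factor factors through fwNj (q-1)
  have hα : ∀ j ∈ range q, (((k - j).choose (q - 1 - j) : ℕ) : ℚ) ≠ 0 := by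
    intro j hj
    rw [mem_range] at hj
    have : q - 1 - j ≤ k - j := by omega
    exact_mod_cast Nat.cast_ne_zero.mpr (Nat.choose_pos this).ne'
  set R : Matrix {T // T ∈ powersetCard (q-1) (univ : Finset (Fin n))} {A // A ∈ F} ℚ :=
    ∑ j ∈ range q, (((m0.choose (q-1-j) : ℕ) : ℚ) * (((k - j).choose (q - 1 - j) : ℕ) : ℚ)⁻¹)
      • (fwP (n := n) q j * (fwNj j F)ᵀ) with hR
  have hMR : M = fwNj (q-1) F * R := by
    rw [hR, Matrix.mul_sum, hMsum]
    refine Finset.sum_congr rfl ?_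
    intro j hj
    rw [mem_range] at hj
    rw [Matrix.mul_smul, ← Matrix.mul_assoc, fwN_path q j k (by omega) F hcard,
      Matrix.smul_mul, smul_smul]
    rw [mul_assoc, inv_mul_cancel₀ (hα j (mem_range.mpr hj)), mul_one]
  -- Step 3: det M ≠ 0
  have hMmap : M = Mz.map (fun x : ℤ => (x : ℚ)) := by
    ext A B; rw [Matrix.map_apply]; simp [hM, hMz, Matrix.map_apply]
  have hq1e : q - 1 = p ^ mm - 1 := by rw [hqe]
  have hdiagval : (((k + m0).choose (q-1) : ℕ) : ZMod p) ≠ 0 := by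
    rw [hq1e]
    rw [lucas_pow]
    rw [← hqe]
    exact ⟨k + 1, by omega⟩
  have hdiag : Mz.map (fun x : ℤ => (x : ZMod p))
      = Matrix.diagonal (fun _ => (((k + m0).choose (q-1) : ℕ) : ZMod p)) := by
    ext A B
    by_cases hAB : A = B
    · subst hAB
      rw [Matrix.diagonal_apply_eq]
      rw [Matrix.map_apply]
      simp only [hMz, Matrix.map_apply, inter_self, hcard A.1 A.2]
      push_cast
      ring
    · rw [Matrix.diagonal_apply_ne _ hAB]
      rw [Matrix.map_apply]
      simp only [hMz, Matrix.map_apply]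
      have hne : A.1 ≠ B.1 := fun hv => hAB (Subtype.ext hv)
      have hmod := hint A.1 A.2 B.1 B.2 hne
      set s := (A.1 ∩ B.1).card with hs
      have : ¬ ((( (s + m0).choose (q-1) : ℕ)) : ZMod p) ≠ 0 := by
        rw [hq1e, lucas_pow, ← hqe]
        intro hdvd
        apply hmod
        obtain ⟨c, hc⟩ := hdvd
        have h1 : (s + m0 + 1 + k) % q = s % q := by
          have : s + m0 + 1 + k = s + q * (k + 1) := by omega
          rw [this, Nat.add_mul_mod_self_left]
        have h2 : (s + m0 + 1 + k) % q = k % q := by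
          rw [hc, Nat.mul_add_mod q c k]
        unfold Nat.ModEq
        omega
      push_neg at this
      push_cast at this ⊢
      exact this
  have hdetp : (Mz.map (fun x : ℤ => (x : ZMod p))).det ≠ 0 := by
    rw [hdiag, Matrix.det_diagonal]
    exact Finset.prod_ne_zero_iff.mpr (fun _ _ => hdiagval)
  have hdetz : Mz.det ≠ 0 := by
    intro h0
    apply hdetp
    have h := RingHom.map_det (Int.castRingHom (ZMod p)) Mz
    rw [RingHom.mapMatrix_apply] at h
    rw [h0] at h
    simpa using h.symm
  have hdet : M.det ≠ 0 := by
    rw [hMmap]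
    have h := RingHom.map_det (Int.castRingHom ℚ) Mz
    rw [RingHom.mapMatrix_apply] at h
    rw [show (fun x : ℤ => (x : ℚ)) = ⇑(Int.castRingHom ℚ) from rfl, ← h]
    simpa using hdetz
  -- Step 4: the dimension argument
  have hcardι : Fintype.card {A // A ∈ F} = F.card := Fintype.card_coe F
  have hcardΩ : Fintype.card {T // T ∈ powersetCard (q-1) (univ : Finset (Fin n))}
      = n.choose (q-1) := by
    rw [Fintype.card_coe, card_powersetCard, card_univ, Fintype.card_fin]
  by_cases hinj : Function.Injective (fwNj (q-1) F).vecMulLinear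
  · have hle := LinearMap.finrank_le_finrank_of_injective hinj
    rw [Module.finrank_pi, Module.finrank_pi, Fintype.card_coe, Fintype.card_coe,
      card_powersetCard, card_univ, Fintype.card_fin] at hle
    omega
  · rw [← LinearMap.ker_eq_bot] at hinj
    obtain ⟨v, hvker, hvne⟩ := Submodule.ne_bot_iff _ |>.mp hinj
    have hvN : v ᵥ* (fwNj (q-1) F) = 0 := hvker
    have h1 : v ᵥ* M = 0 := by
      rw [hMR, ← Matrix.vecMul_vecMul, hvN, Matrix.zero_vecMul]
    have hu : IsUnit M.det := isUnit_iff_ne_zero.mpr hdet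
    apply hvne
    calc v = v ᵥ* (1 : Matrix {A // A ∈ F} {A // A ∈ F} ℚ) := (Matrix.vecMul_one v).symm
    _ = v ᵥ* (M * M⁻¹) := by rw [Matrix.mul_nonsing_inv _ hu]
    _ = (v ᵥ* M) ᵥ* M⁻¹ := (Matrix.vecMul_vecMul _ _ _).symm
    _ = 0 := by rw [h1, Matrix.zero_vecMul]
end

section
/- Let n ≥ k ≥ 1 and L ⊆ {0,...,k-1}. If F is a family of k-element subsets of {1,...,n} with |A ∩ B| ∈ L for all distinct A, B ∈ F, then |F| ≤ C(n, |L|). -/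
open Finset

namespace RCW

variable {n : ℕ}

/-- indicator monomial -/
noncomputable def m (I : Finset (Fin n)) : Finset (Fin n) → ℝ :=
  fun S => if I ⊆ S then 1 else 0

/-- span of monomials of degree at most `d` -/
noncomputable def P (n d : ℕ) : Submodule ℝ (Finset (Fin n) → ℝ) :=
  Submodule.span ℝ (m '' {I | I.card ≤ d})

lemma P_mono {d e : ℕ} (h : d ≤ e) : P n d ≤ P n e :=
  Submodule.span_mono (Set.image_mono fun I hI => le_trans hI h)

lemma m_mem {I : Finset (Fin n)} {d : ℕ} (h : I.card ≤ d) : m I ∈ P n d :=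
  Submodule.subset_span ⟨I, h, rfl⟩

lemma mul_mem_P (A : Finset (Fin n)) (c : ℝ) {d : ℕ} {h : Finset (Fin n) → ℝ}
    (hh : h ∈ P n d) :
    (fun S => (((A ∩ S).card : ℝ) - c) * h S) ∈ P n (d + 1) := by
  let w : Finset (Fin n) → ℝ := fun S => ((A ∩ S).card : ℝ) - c
  have : (fun S => (((A ∩ S).card : ℝ) - c) * h S) = LinearMap.mulLeft ℝ w h := rfl
  rw [this]
  have hmap : P n d ≤ (P n (d + 1)).comap (LinearMap.mulLeft ℝ w) := by
    rw [P, Submodule.span_le]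
    rintro - ⟨I, hI, rfl⟩
    simp only [SetLike.mem_coe, Submodule.mem_comap]
    have key : LinearMap.mulLeft ℝ w (m I)
        = (∑ i ∈ A, m (insert i I)) - c • m I := by
      funext S
      simp only [LinearMap.mulLeft_apply, Pi.mul_apply, Pi.sub_apply, Pi.smul_apply,
        Finset.sum_apply, smul_eq_mul, m, w]
      by_cases hIS : I ⊆ S
      · have : ∀ i ∈ A, (if insert i I ⊆ S then (1 : ℝ) else 0)
            = if i ∈ S then 1 else 0 := by
          intro i _
          by_cases hi : i ∈ S
          · simp [hi, Finset.insert_subset_iff, hIS]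
          · simp [hi, Finset.insert_subset_iff]
        rw [Finset.sum_congr rfl this]
        have : ∑ i ∈ A, (if i ∈ S then (1 : ℝ) else 0) = ((A ∩ S).card : ℝ) := by
          rw [Finset.sum_ite_mem, Finset.sum_const, nsmul_eq_mul, mul_one]
        rw [this]
        simp [hIS]
      · have : ∀ i ∈ A, (if insert i I ⊆ S then (1 : ℝ) else 0) = 0 := by
          intro i _
          have : ¬ insert i I ⊆ S := fun hcon => hIS (Finset.Subset.trans
            (Finset.subset_insert i I) hcon)
          simp [this]
        rw [Finset.sum_congr rfl this]
        simp [hIS]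
    rw [key]
    refine Submodule.sub_mem _ (Submodule.sum_mem _ fun i _ => ?_)
      (Submodule.smul_mem _ _ (m_mem (le_trans hI (Nat.le_succ d))))
    exact m_mem (le_trans (Finset.card_insert_le i I) (Nat.succ_le_succ hI))
  exact hmap hh

lemma prod_mem_P (L : Finset ℕ) (A : Finset (Fin n)) :
    (fun S => ∏ l ∈ L, (((A ∩ S).card : ℝ) - l)) ∈ P n L.card := by
  induction L using Finset.cons_induction with
  | empty =>
    have : (fun _ : Finset (Fin n) => (1 : ℝ)) = m (∅ : Finset (Fin n)) := by
      funext S; simp [m]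
    simpa [this] using m_mem (n := n) (I := ∅) (d := 0) (by simp)
  | cons a L ha ih =>
    have : (fun S => ∏ l ∈ Finset.cons a L ha, (((A ∩ S).card : ℝ) - l))
        = fun S => (((A ∩ S).card : ℝ) - a) * ∏ l ∈ L, (((A ∩ S).card : ℝ) - l) := by
      funext S; rw [Finset.prod_cons]
    rw [this, Finset.card_cons]
    exact mul_mem_P A a ih

lemma g_mem_P (k : ℕ) (I : Finset (Fin n)) :
    (fun S => (((Finset.univ ∩ S).card : ℝ) - k) * m I S) ∈ P n (I.card + 1) :=
  mul_mem_P Finset.univ k (m_mem le_rfl)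

end RCW

/-- Ray-Chaudhuri–Wilson: an `L`-system of `k`-subsets of `{1,...,n}` has at
most `C(n, |L|)` members. -/
theorem ray_chaudhuri_wilson (n k : ℕ) (hk : 1 ≤ k) (hn : k ≤ n)
    (L : Finset ℕ) (hL : L ⊆ Finset.range k)
    (F : Finset (Finset (Fin n)))
    (hcard : ∀ A ∈ F, A.card = k)
    (hint : ∀ A ∈ F, ∀ B ∈ F, A ≠ B → (A ∩ B).card ∈ L) :
    F.card ≤ n.choose L.card := by
  classical
  set s := L.card with hs
  have hsk : s ≤ k := by
    have := Finset.card_le_card hL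
    simpa using this
  -- trivial case s = 0
  rcases Nat.eq_zero_or_pos s with hs0 | hs1
  · have hLempty : L = ∅ := Finset.card_eq_zero.mp hs0
    rw [hs0, Nat.choose_zero_right]
    by_contra hcon
    push_neg at hcon
    obtain ⟨A, hA, B, hB, hAB⟩ := Finset.one_lt_card.mp hcon
    have := hint A hA B hB hAB
    simp [hLempty] at this
  -- main case
  set fA : Finset (Fin n) → (Finset (Fin n) → ℝ) :=
    fun A => fun S => ∏ l ∈ L, (((A ∩ S).card : ℝ) - l) with hfA
  set g : Finset (Fin n) → (Finset (Fin n) → ℝ) :=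
    fun I => fun S => (((Finset.univ ∩ S).card : ℝ) - k) * RCW.m I S with hg
  set Fsmall : Finset (Finset (Fin n)) :=
    Finset.univ.filter (fun I => I.card < s) with hFsmall
  set v : (↥F) ⊕ (↥Fsmall) → (Finset (Fin n) → ℝ) :=
    Sum.elim (fun A => fA A.1) (fun I => g I.1) with hv
  -- linear independence
  have hindep : LinearIndependent ℝ v := by
    rw [Fintype.linearIndependent_iff]
    intro c hc i
    -- evaluation helper
    have heval : ∀ S : Finset (Fin n),
        (∑ A : ↥F, c (Sum.inl A) * fA A.1 S)
          + (∑ I : ↥Fsmall, c (Sum.inr I) * g I.1 S) = 0 := by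
      intro S
      have := congrFun hc S
      simpa [hv, Fintype.sum_sum_type, Finset.sum_apply, Pi.smul_apply, smul_eq_mul]
        using this
    -- step 1 : coefficients of fA vanish
    have step1 : ∀ A : ↥F, c (Sum.inl A) = 0 := by
      intro A₀
      have h0 := heval A₀.1
      have hg0 : ∀ I : ↥Fsmall, c (Sum.inr I) * g I.1 A₀.1 = 0 := by
        intro I
        have : g I.1 A₀.1 = 0 := by
          simp [hg, Finset.univ_inter, hcard A₀.1 A₀.2]
        rw [this, mul_zero]
      rw [Finset.sum_congr rfl (fun I _ => hg0 I), Finset.sum_const_zero, add_zero] at h0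
      have hmain : ∑ A : ↥F, c (Sum.inl A) * fA A.1 A₀.1
          = c (Sum.inl A₀) * fA A₀.1 A₀.1 := by
        refine Finset.sum_eq_single A₀ (fun B _ hB => ?_) (by simp)
        have hBne : B.1 ≠ A₀.1 := fun h => hB (Subtype.ext h)
        have hmem : (B.1 ∩ A₀.1).card ∈ L := hint B.1 B.2 A₀.1 A₀.2 hBne
        have : fA B.1 A₀.1 = 0 :=
          Finset.prod_eq_zero hmem (by simp)
        simp [this]
      rw [hmain] at h0
      have hne : fA A₀.1 A₀.1 ≠ 0 := by
        rw [hfA]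
        refine Finset.prod_ne_zero_iff.mpr fun l hl => ?_
        have hlk : l < k := Finset.mem_range.mp (hL hl)
        have : ((A₀.1 ∩ A₀.1).card : ℝ) = k := by
          rw [Finset.inter_self, hcard A₀.1 A₀.2]
        rw [this]
        have : (l : ℝ) < k := by exact_mod_cast hlk
        linarith
      exact (mul_eq_zero.mp h0).resolve_right hne
    -- step 2 : coefficients of g vanish
    have heval2 : ∀ S : Finset (Fin n),
        (∑ I : ↥Fsmall, c (Sum.inr I) * g I.1 S) = 0 := by
      intro S
      have := heval S
      rw [Finset.sum_congr rfl (fun A _ => by rw [step1 A, zero_mul]),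
        Finset.sum_const_zero, zero_add] at this
      exact this
    have step2 : ∀ t : ℕ, ∀ I : ↥Fsmall, (I : Finset (Fin n)).card ≤ t →
        c (Sum.inr I) = 0 := by
      intro t
      induction t with
      | zero =>
        intro I₀ hI₀
        have h0 := heval2 I₀.1
        have hmain : ∑ I : ↥Fsmall, c (Sum.inr I) * g I.1 I₀.1
            = c (Sum.inr I₀) * g I₀.1 I₀.1 := by
          refine Finset.sum_eq_single I₀ (fun J _ hJ => ?_) (by simp)
          have hJne : J.1 ≠ I₀.1 := fun h => hJ (Subtype.ext h)
          by_cases hsub : J.1 ⊆ I₀.1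
          · have : J.1.card < I₀.1.card := Finset.card_lt_card (ssubset_of_subset_of_ne hsub hJne)
            omega
          · simp [hg, RCW.m, hsub]
        rw [hmain] at h0
        have hne : g I₀.1 I₀.1 ≠ 0 := by
          have hlt : (I₀ : Finset (Fin n)).card < k := lt_of_lt_of_le
            (Finset.mem_filter.mp I₀.2).2 hsk
          simp only [hg, RCW.m, Finset.univ_inter, Finset.Subset.refl, if_pos, mul_one]
          intro hcon
          have : ((I₀ : Finset (Fin n)).card : ℝ) = k := by linarith [sub_eq_zero.mp hcon]
          have : (I₀ : Finset (Fin n)).card = k := by exact_mod_cast this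
          omega
        exact (mul_eq_zero.mp h0).resolve_right hne
      | succ t ih =>
        intro I₀ hI₀
        have h0 := heval2 I₀.1
        have hmain : ∑ I : ↥Fsmall, c (Sum.inr I) * g I.1 I₀.1
            = c (Sum.inr I₀) * g I₀.1 I₀.1 := by
          refine Finset.sum_eq_single I₀ (fun J _ hJ => ?_) (by simp)
          have hJne : J.1 ≠ I₀.1 := fun h => hJ (Subtype.ext h)
          by_cases hsub : J.1 ⊆ I₀.1
          · have hltcard : J.1.card < I₀.1.card :=
              Finset.card_lt_card (ssubset_of_subset_of_ne hsub hJne)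
            have : c (Sum.inr J) = 0 := ih J (by omega)
            simp [this]
          · simp [hg, RCW.m, hsub]
        rw [hmain] at h0
        have hne : g I₀.1 I₀.1 ≠ 0 := by
          have hlt : (I₀ : Finset (Fin n)).card < k := lt_of_lt_of_le
            (Finset.mem_filter.mp I₀.2).2 hsk
          simp only [hg, RCW.m, Finset.univ_inter, Finset.Subset.refl, if_pos, mul_one]
          intro hcon
          have : ((I₀ : Finset (Fin n)).card : ℝ) = k := by linarith [sub_eq_zero.mp hcon]
          have : (I₀ : Finset (Fin n)).card = k := by exact_mod_cast this
          omega
        exact (mul_eq_zero.mp h0).resolve_right hne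
    match i with
    | Sum.inl A => exact step1 A
    | Sum.inr I => exact step2 (I : Finset (Fin n)).card I le_rfl
  -- all vectors lie in P n s
  have hmemP : ∀ i : (↥F) ⊕ (↥Fsmall), v i ∈ RCW.P n s := by
    rintro (A | I)
    · exact RCW.prod_mem_P L A.1
    · refine RCW.P_mono ?_ (RCW.g_mem_P k I.1)
      have : (I : Finset (Fin n)).card < s := (Finset.mem_filter.mp I.2).2
      omega
  -- dimension count
  set T : Finset (Finset (Fin n) → ℝ) := (Finset.univ.filter (fun I : Finset (Fin n) => I.card ≤ s)).image RCW.m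
    with hT
  have hTspan : RCW.P n s = Submodule.span ℝ (T : Set (Finset (Fin n) → ℝ)) := by
    rw [RCW.P, hT]
    congr 1
    rw [Finset.coe_image]
    congr 1
    ext I
    simp
  have hcardle : Fintype.card ((↥F) ⊕ (↥Fsmall)) ≤ T.card := by
    have h1 : Fintype.card ((↥F) ⊕ (↥Fsmall)) ≤ Module.finrank ℝ (Submodule.span ℝ (Set.range v)) :=
      (linearIndependent_span hindep).fintype_card_le_finrank
    have h2 : Submodule.span ℝ (Set.range v) ≤ Submodule.span ℝ (T : Set (Finset (Fin n) → ℝ)) := by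
      rw [Submodule.span_le]
      rintro - ⟨i, rfl⟩
      rw [← hTspan]
      exact hmemP i
    have h3 : Module.finrank ℝ (Submodule.span ℝ (Set.range v))
        ≤ Module.finrank ℝ (Submodule.span ℝ (T : Set (Finset (Fin n) → ℝ))) :=
      Submodule.finrank_mono h2
    have h4 : Module.finrank ℝ (Submodule.span ℝ (T : Set (Finset (Fin n) → ℝ))) ≤ T.card :=
      finrank_span_finset_le_card T
    omega
  have hcardι : Fintype.card ((↥F) ⊕ (↥Fsmall)) = F.card + Fsmall.card := by
    simp [Fintype.card_sum]
  have hTle : T.card ≤ (Finset.univ.filter (fun I : Finset (Fin n) => I.card ≤ s)).card :=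
    Finset.card_image_le
  -- counting subsets
  have hsplit : (Finset.univ.filter (fun I : Finset (Fin n) => I.card ≤ s)).card
      = Fsmall.card + n.choose s := by
    have h1 : Finset.univ.filter (fun I : Finset (Fin n) => I.card ≤ s)
        = Fsmall ∪ Finset.univ.filter (fun I : Finset (Fin n) => I.card = s) := by
      rw [hFsmall, ← Finset.filter_or]
      apply Finset.filter_congr
      intro I _
      constructor
      · intro h; omega
      · intro h; omega
    have h2 : Disjoint Fsmall (Finset.univ.filter (fun I : Finset (Fin n) => I.card = s)) := by
      rw [Finset.disjoint_left]
      intro I hI1 hI2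
      have := (Finset.mem_filter.mp hI1).2
      have := (Finset.mem_filter.mp hI2).2
      omega
    have h3 : (Finset.univ.filter (fun I : Finset (Fin n) => I.card = s))
        = Finset.powersetCard s Finset.univ := by
      ext I
      simp [Finset.mem_powersetCard_univ]
    rw [h1, Finset.card_union_of_disjoint h2, h3, Finset.card_powersetCard]
    simp
  omega
end
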